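/- Conversely, if for all s the characteristic polynomial of 𝒜 = [[A, B₂H + 2Θ R_c], [G₁C + 2Θ R_c^T, A − G₁C + B₂H]] equals det(sI − A − B₂H − 2Θ R_c)·det(sI − A + G₁C + 2Θ R_c) for all choices of A, B₂H, G₁C, then the off-diagonal error-coupling block 2Θ(R_c − R_c^T) in the transformed coordinates must vanish, i.e., R_c = R_c^T (using that Θ is invertible). -/

import Mathlib

open Matrix Kronecker

def Jmat : Matrix (Fin 2) (Fin 2) ℝ := !![0, 1; -1, 0]

/-- `Θ_n = I_{n/2} ⊗ J`, realized on the index type `Fin m × Fin 2` (so `n = 2m`). -/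
def Theta (m : ℕ) : Matrix (Fin m × Fin 2) (Fin m × Fin 2) ℝ :=
  (1 : Matrix (Fin m) (Fin m) ℝ) ⊗ₖ Jmat

/-- Auxiliary equivalence `ι ⊕ ι ≃ ι × Fin 2`. -/
def sumToProd (ι : Type*) : ι ⊕ ι ≃ ι × Fin 2 where
  toFun := Sum.elim (fun i => (i, 0)) (fun i => (i, 1))
  invFun p := if p.2 = 0 then Sum.inl p.1 else Sum.inr p.1
  left_inv x := by rcases x with i | i <;> simp
  right_inv p := by
    rcases p with ⟨i, a⟩
    fin_cases a <;> simp

/-- The block swap matrix on an even-dimensional space has determinant `1`. -/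
lemma detJ2 (m : ℕ) :
    (fromBlocks (0 : Matrix (Fin m × Fin 2) (Fin m × Fin 2) ℝ) (1 : Matrix (Fin m × Fin 2) (Fin m × Fin 2) ℝ) (1 : Matrix (Fin m × Fin 2) (Fin m × Fin 2) ℝ) (0 : Matrix (Fin m × Fin 2) (Fin m × Fin 2) ℝ)).det = 1 := by
  have hrepr : (fromBlocks (0 : Matrix (Fin m × Fin 2) (Fin m × Fin 2) ℝ) (1 : Matrix (Fin m × Fin 2) (Fin m × Fin 2) ℝ) (1 : Matrix (Fin m × Fin 2) (Fin m × Fin 2) ℝ) (0 : Matrix (Fin m × Fin 2) (Fin m × Fin 2) ℝ))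
      = (((1 : Matrix (Fin m × Fin 2) (Fin m × Fin 2) ℝ) ⊗ₖ !![(0:ℝ),1;1,0]).submatrix
          (sumToProd (Fin m × Fin 2)) (sumToProd (Fin m × Fin 2))) := by
    ext x y
    rcases x with a | a <;> rcases y with b | b <;>
      simp [sumToProd, fromBlocks, kroneckerMap_apply, submatrix_apply]
  rw [hrepr, det_submatrix_equiv_self, det_kronecker, det_one, one_pow, one_mul]
  have hS : (!![(0:ℝ),1;1,0]).det = -1 := by simp [Matrix.det_fin_two_of]
  rw [hS]
  have hcard : Fintype.card (Fin m × Fin 2) = m * 2 := by simp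
  rw [hcard]
  exact Even.neg_one_pow (even_two.mul_left m)

/-- If `det (fromBlocks W (1-W) (W-1+D) (2-W)) = 1` for all `W`, then `D = 0`. -/
lemma forces_zero {n : Type*} [Fintype n] [DecidableEq n] (D : Matrix n n ℝ)
    (hJ : (fromBlocks (0 : Matrix n n ℝ) (1 : Matrix n n ℝ) (1 : Matrix n n ℝ) (0 : Matrix n n ℝ)).det = 1)
    (h : ∀ W : Matrix n n ℝ, (fromBlocks W (1 - W) (W - 1 + D) (1 + 1 - W)).det = 1) :
    D = 0 := by
  have key : ∀ W : Matrix n n ℝ, (D - 1 - D * W).det = 1 := by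
    intro W
    have hM : (fromBlocks W (1 - W) (W - 1 + D) (1 + 1 - W) : Matrix (n ⊕ n) (n ⊕ n) ℝ)
        = fromBlocks (1 : Matrix n n ℝ) (0 : Matrix n n ℝ) (1 : Matrix n n ℝ) (1 : Matrix n n ℝ) * fromBlocks (1 : Matrix n n ℝ) (0 : Matrix n n ℝ) D (1 : Matrix n n ℝ) * fromBlocks (0 : Matrix n n ℝ) (1 : Matrix n n ℝ) (1 : Matrix n n ℝ) (0 : Matrix n n ℝ) *
          fromBlocks (D - 1 - D * W) (0 : Matrix n n ℝ) (0 : Matrix n n ℝ) (1 : Matrix n n ℝ) * fromBlocks (1 : Matrix n n ℝ) (0 : Matrix n n ℝ) W (1 : Matrix n n ℝ) * fromBlocks (1 : Matrix n n ℝ) (-1 : Matrix n n ℝ) (0 : Matrix n n ℝ) (1 : Matrix n n ℝ) := by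
      simp only [fromBlocks_multiply]
      refine fromBlocks_inj.mpr ⟨?_, ?_, ?_, ?_⟩ <;> noncomm_ring
    have d1 : (fromBlocks (1 : Matrix n n ℝ) (0 : Matrix n n ℝ) (1 : Matrix n n ℝ) (1 : Matrix n n ℝ)).det = 1 := by
      rw [det_fromBlocks_zero₁₂]; simp
    have d2 : (fromBlocks (1 : Matrix n n ℝ) (0 : Matrix n n ℝ) D (1 : Matrix n n ℝ)).det = 1 := by
      rw [det_fromBlocks_zero₁₂]; simp
    have d3 : (fromBlocks (D - 1 - D * W) (0 : Matrix n n ℝ) (0 : Matrix n n ℝ) (1 : Matrix n n ℝ)).det = (D - 1 - D * W).det := by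
      rw [det_fromBlocks_zero₁₂]; simp
    have d4 : (fromBlocks (1 : Matrix n n ℝ) (0 : Matrix n n ℝ) W (1 : Matrix n n ℝ)).det = 1 := by
      rw [det_fromBlocks_zero₁₂]; simp
    have d5 : (fromBlocks (1 : Matrix n n ℝ) (-1 : Matrix n n ℝ) (0 : Matrix n n ℝ) (1 : Matrix n n ℝ)).det = 1 := by
      rw [det_fromBlocks_zero₂₁]; simp
    have hd := h W
    rw [hM, det_mul, det_mul, det_mul, det_mul, det_mul, d1, d2, hJ, d3, d4, d5] at hd
    simpa using hd
  have hneg : ((-1 : Matrix n n ℝ)).det = 1 := by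
    have h1 := key 1
    have : D - 1 - D * 1 = -1 := by noncomm_ring
    rwa [this] at h1
  have entry : ∀ p q, D p q = 0 := by
    intro p q
    have hW := key (1 - single q p 1)
    have hrw : D - 1 - D * (1 - single q p 1)
        = -1 * (1 - D * single q p 1) := by noncomm_ring
    rw [hrw, det_mul, hneg, one_mul] at hW
    have hcol : (1 : Matrix n n ℝ) - D * single q p 1
        = 1 + replicateCol Unit (fun i => D i q) * replicateRow Unit (fun j => if j = p then (-1:ℝ) else 0) := by
      ext i j
      by_cases hj : j = p
      · subst hj
        simp [Matrix.mul_apply, Matrix.single, Matrix.replicateCol, Matrix.replicateRow,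
          Finset.sum_ite_eq, sub_eq_add_neg]
      · simp [Matrix.mul_apply, Matrix.single, Matrix.replicateCol, Matrix.replicateRow, hj,
          Ne.symm hj]
    rw [hcol, det_one_add_replicateCol_mul_replicateRow] at hW
    have : (fun j => if j = p then (-1:ℝ) else 0) ⬝ᵥ (fun i => D i q) = -D p q := by
      simp [dotProduct, ite_mul, Finset.sum_ite_eq]
    rw [this] at hW
    linarith
  ext i j
  exact entry i j

/-- Converse direction: if the closed-loop characteristic polynomial factors as the
product of the regulator and observer characteristic polynomials for all choices of
`A`, `K = B₂H`, `L = G₁C` (and all `s`), then `R_c` must be symmetric. -/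
theorem charpoly_factorization_forces_symm (m : ℕ)
    (Rc : Matrix (Fin m × Fin 2) (Fin m × Fin 2) ℝ)
    (hfac : ∀ (A K L : Matrix (Fin m × Fin 2) (Fin m × Fin 2) ℝ) (s : ℝ),
      (s • (1 : Matrix ((Fin m × Fin 2) ⊕ (Fin m × Fin 2)) ((Fin m × Fin 2) ⊕ (Fin m × Fin 2)) ℝ) -
          fromBlocks A (K + 2 • (Theta m * Rc)) (L + 2 • (Theta m * Rcᵀ))
            (A - L + K)).det =
        (s • (1 : Matrix (Fin m × Fin 2) (Fin m × Fin 2) ℝ)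
            - A - K - 2 • (Theta m * Rc)).det *
        (s • (1 : Matrix (Fin m × Fin 2) (Fin m × Fin 2) ℝ)
            - A + L + 2 • (Theta m * Rc)).det) :
    Rc = Rcᵀ := by
  have hD : 2 • (Theta m * Rc) - 2 • (Theta m * Rcᵀ) = 0 := by
    apply forces_zero _ (detJ2 m)
    intro W
    have h := hfac (-W) (W - 1 - 2 • (Theta m * Rc))
      (1 - (2 • (Theta m * Rc) - 2 • (Theta m * Rcᵀ)) - W - 2 • (Theta m * Rcᵀ)) 0
    have e0 : fromBlocks W (1 - W)
          (W - 1 + (2 • (Theta m * Rc) - 2 • (Theta m * Rcᵀ))) (1 + 1 - W)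
        = (0:ℝ) • (1 : Matrix ((Fin m × Fin 2) ⊕ (Fin m × Fin 2))
              ((Fin m × Fin 2) ⊕ (Fin m × Fin 2)) ℝ) -
          fromBlocks (-W) ((W - 1 - 2 • (Theta m * Rc)) + 2 • (Theta m * Rc))
            ((1 - (2 • (Theta m * Rc) - 2 • (Theta m * Rcᵀ)) - W - 2 • (Theta m * Rcᵀ))
              + 2 • (Theta m * Rcᵀ))
            ((-W) - (1 - (2 • (Theta m * Rc) - 2 • (Theta m * Rcᵀ)) - W - 2 • (Theta m * Rcᵀ))
              + (W - 1 - 2 • (Theta m * Rc))) := by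
      rw [zero_smul, zero_sub, fromBlocks_neg, fromBlocks_inj]
      refine ⟨by abel, by abel, by abel, by abel⟩
    have e1 : (0:ℝ) • (1 : Matrix (Fin m × Fin 2) (Fin m × Fin 2) ℝ)
        - (-W) - (W - 1 - 2 • (Theta m * Rc)) - 2 • (Theta m * Rc) = 1 := by
      rw [zero_smul]; abel
    have e2 : (0:ℝ) • (1 : Matrix (Fin m × Fin 2) (Fin m × Fin 2) ℝ)
        - (-W) + (1 - (2 • (Theta m * Rc) - 2 • (Theta m * Rcᵀ)) - W - 2 • (Theta m * Rcᵀ))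
        + 2 • (Theta m * Rc) = 1 := by
      rw [zero_smul]; abel
    rw [e0, h, e1, e2, det_one, one_mul]
  have h2 : 2 • (Theta m * Rc) = 2 • (Theta m * Rcᵀ) := sub_eq_zero.mp hD
  have hTR : Theta m * Rc = Theta m * Rcᵀ := by
    ext i j
    have := congrFun (congrFun h2 i) j
    simp only [Matrix.smul_apply, smul_eq_mul, nsmul_eq_mul, Nat.cast_ofNat] at this
    linarith
  have hT : Theta m * Theta m = -1 := by
    have hJ : Jmat * Jmat = -1 := by
      ext i j
      fin_cases i <;> fin_cases j <;>
        simp [Jmat, Matrix.mul_apply, Fin.sum_univ_two, Matrix.one_apply]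
    unfold Theta
    rw [← mul_kronecker_mul, one_mul, hJ]
    have : (-1 : Matrix (Fin 2) (Fin 2) ℝ) = (-1 : ℝ) • 1 := by simp
    rw [this, kronecker_smul, one_kronecker_one]
    simp
  have : -Rc = -Rcᵀ := by
    calc -Rc = (Theta m * Theta m) * Rc := by rw [hT]; simp [neg_one_mul]
    _ = Theta m * (Theta m * Rc) := by rw [mul_assoc]
    _ = Theta m * (Theta m * Rcᵀ) := by rw [hTR]
    _ = (Theta m * Theta m) * Rcᵀ := by rw [mul_assoc]
    _ = -Rcᵀ := by rw [hT]; simp [neg_one_mul]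
  exact neg_injective this
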